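/- Let p be an odd prime, n ≥ 1, and r a generator of (ℤ/p^n)^×. For any nonzero integer m, the p-adic valuation of r^{m(p−1)} − 1 (computed for any lift of r to ℤ) equals min(1 + v_p(m), n), i.e., r^{m(p-1)} - 1 is divisible by p^i and, when i < n, not by p^{i+1}, where p^i = gcd(|m|·p, p^n). -/

import Mathlib

private lemma gcd_pow_pow (p a b : ℕ) : Nat.gcd (p ^ a) (p ^ b) = p ^ min a b := by
  rcases le_total a b with h | h
  · rw [min_eq_left h, Nat.gcd_eq_left (pow_dvd_pow p h)]
  · rw [min_eq_right h, Nat.gcd_eq_right (pow_dvd_pow p h)]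

theorem stmt1 (p n : ℕ) (hp : p.Prime) (hodd : Odd p) (hn : 1 ≤ n)
    (r : ℤ)
    (hr : ∃ u : (ZMod (p ^ n))ˣ, ((u : ZMod (p ^ n)) = (r : ZMod (p ^ n)) ∧
      ∀ x : (ZMod (p ^ n))ˣ, x ∈ Subgroup.zpowers u))
    (m : ℤ) (hm : m ≠ 0) :
    p ^ min (1 + padicValInt p m) n = Nat.gcd (m.natAbs * p) (p ^ n) ∧
    (p : ℤ) ^ min (1 + padicValInt p m) n ∣ r ^ (m.natAbs * (p - 1)) - 1 ∧
    (min (1 + padicValInt p m) n < n →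
      ¬ (p : ℤ) ^ (min (1 + padicValInt p m) n + 1) ∣ r ^ (m.natAbs * (p - 1)) - 1) := by
  haveI : Fact p.Prime := ⟨hp⟩
  have hp3 : 3 ≤ p := by
    have := hp.two_le
    rcases Nat.odd_iff.mp hodd with h
    omega
  set M := m.natAbs with hMdef
  have hM : M ≠ 0 := Int.natAbs_ne_zero.mpr hm
  set v := padicValInt p m with hvdef
  have hvM : v = padicValNat p M := rfl
  set i := min (1 + v) n with hidef
  obtain ⟨u, hu, hgen⟩ := hr
  -- gcd part
  have hgcd : p ^ i = Nat.gcd (M * p) (p ^ n) := by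
    have hc := Nat.ordProj_mul_ordCompl_eq_self M p
    rw [Nat.factorization_def M hp, ← hvM] at hc
    have hpc : ¬ p ∣ M / p ^ (M.factorization p) := Nat.not_dvd_ordCompl hp hM
    rw [Nat.factorization_def M hp, ← hvM] at hpc
    set c := M / p ^ v with hcdef
    have hcop : Nat.Coprime c (p ^ n) :=
      Nat.Coprime.pow_right n ((hp.coprime_iff_not_dvd.mpr hpc).symm)
    calc p ^ i = Nat.gcd (p ^ (v + 1)) (p ^ n) := by
          rw [gcd_pow_pow]; congr 1; omega
      _ = Nat.gcd (c * p ^ (v + 1)) (p ^ n) := (Nat.Coprime.gcd_mul_left_cancel _ hcop).symm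
      _ = Nat.gcd (M * p) (p ^ n) := by
          congr 1
          rw [pow_succ, ← mul_assoc, mul_comm c (p ^ v), hc]
  -- basic facts about r
  have hpr : ¬ (p : ℤ) ∣ r := by
    intro hd
    have h1 : IsUnit ((r : ℤ) : ZMod (p ^ n)) := hu ▸ u.isUnit
    have h2 : IsUnit ((r : ℤ) : ZMod p) := by
      have := h1.map (ZMod.castHom (dvd_pow_self p (by omega : n ≠ 0)) (ZMod p))
      rwa [map_intCast] at this
    have h0 : ((r : ℤ) : ZMod p) = 0 := (ZMod.intCast_zmod_eq_zero_iff_dvd r p).mpr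
      (by exact_mod_cast hd)
    rw [h0] at h2
    exact (not_isUnit_zero h2)
  set a : ℤ := r ^ (p - 1) with hadef
  have hfermat : (p : ℤ) ∣ a - 1 := by
    rw [← ZMod.intCast_zmod_eq_zero_iff_dvd, hadef]
    push_cast
    rw [sub_eq_zero]
    exact ZMod.pow_card_sub_one_eq_one
      (fun h0 => hpr ((ZMod.intCast_zmod_eq_zero_iff_dvd r p).mp (by exact_mod_cast h0)))
  have hpa : ¬ (p : ℤ) ∣ a := fun h =>
    hpr ((Nat.prime_iff_prime_int.mp hp).dvd_of_dvd_pow (hadef ▸ h))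
  -- order of u
  have horder : orderOf u = p ^ (n - 1) * (p - 1) := by
    have h1 : orderOf u = Nat.card (ZMod (p ^ n))ˣ :=
      orderOf_eq_card_of_forall_mem_zpowers hgen
    rwa [Nat.card_eq_fintype_card, ZMod.card_units_eq_totient,
      Nat.totient_prime_pow hp (by omega)] at h1
  have hord_dvd : ∀ k : ℕ, (p : ℤ) ^ n ∣ a ^ k - 1 → orderOf u ∣ (p - 1) * k := by
    intro k hk
    apply orderOf_dvd_of_pow_eq_one
    have h0 : ((a ^ k - 1 : ℤ) : ZMod (p ^ n)) = 0 := by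
      rw [ZMod.intCast_zmod_eq_zero_iff_dvd]
      exact_mod_cast hk
    rw [hadef] at h0
    push_cast at h0
    rw [sub_eq_zero, ← pow_mul] at h0
    apply Units.ext
    rw [Units.val_pow_eq_pow_val, hu, Units.val_one]
    exact h0
  -- a ≠ 1 and second-power nondivisibility for n ≥ 2, giving exact emultiplicity
  have hEfact : 2 ≤ n → emultiplicity ((p : ℤ)) (a ^ M - 1) = ((1 + v : ℕ) : ℕ∞) := by
    intro hn2
    have hq : 2 ≤ p - 1 := by omega
    have hane1 : a ≠ 1 := by
      intro h1
      have hdd : (p : ℤ) ^ n ∣ a ^ 1 - 1 := by simp [h1]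
      have hd := hord_dvd 1 hdd
      rw [horder, mul_one] at hd
      have hle := Nat.le_of_dvd (by omega) hd
      have hple : p ≤ p ^ (n - 1) := Nat.le_self_pow (by omega) p
      have h3 : p * (p - 1) ≤ 1 * (p - 1) := by
        rw [one_mul]
        exact le_trans (Nat.mul_le_mul_right _ hple) hle
      have := Nat.le_of_mul_le_mul_right h3 (by omega : 0 < p - 1)
      omega
    have h2nd : ¬ (p : ℤ) ^ 2 ∣ a - 1 := by
      intro h2
      have hlte := Int.emultiplicity_pow_sub_pow hp hodd (by simpa using hfermat) hpa (p ^ (n - 2))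
      simp only [one_pow] at hlte
      have he1 : ((2 : ℕ) : ℕ∞) ≤ emultiplicity ((p : ℤ)) (a - 1) :=
        le_emultiplicity_of_pow_dvd h2
      have he2 : emultiplicity p (p ^ (n - 2)) = ((n - 2 : ℕ) : ℕ∞) :=
        emultiplicity_pow_self_of_prime hp.prime _
      have hge : (n : ℕ∞) ≤ emultiplicity ((p : ℤ)) (a ^ (p ^ (n - 2)) - 1) := by
        rw [hlte, he2]
        calc (n : ℕ∞) = ((2 : ℕ) : ℕ∞) + ((n - 2 : ℕ) : ℕ∞) := by
              rw [← Nat.cast_add]; congr 1; omega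
          _ ≤ _ := add_le_add_left he1 _
      have hdvd : (p : ℤ) ^ n ∣ a ^ (p ^ (n - 2)) - 1 :=
        pow_dvd_of_le_emultiplicity hge
      have hd := hord_dvd _ hdvd
      rw [horder] at hd
      have hle := Nat.le_of_dvd (by positivity) hd
      have hsplit : p ^ (n - 1) = p * p ^ (n - 2) := by
        rw [← pow_succ']; congr 1; omega
      have h3 : p * (p ^ (n - 2) * (p - 1)) ≤ 1 * (p ^ (n - 2) * (p - 1)) := by
        rw [one_mul]
        calc p * (p ^ (n - 2) * (p - 1)) = p ^ (n - 1) * (p - 1) := by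
              rw [hsplit]; ring
          _ ≤ (p - 1) * p ^ (n - 2) := hle
          _ = p ^ (n - 2) * (p - 1) := mul_comm _ _
      have := Nat.le_of_mul_le_mul_right h3
        (by positivity : 0 < p ^ (n - 2) * (p - 1))
      omega
    have hem1 : emultiplicity ((p : ℤ)) (a - 1) = ((1 : ℕ) : ℕ∞) :=
      emultiplicity_eq_of_dvd_of_not_dvd (by simpa using hfermat) (by simpa using h2nd)
    have hlte := Int.emultiplicity_pow_sub_pow hp hodd (by simpa using hfermat) hpa M
    simp only [one_pow] at hlte
    have hemM : emultiplicity p M = (v : ℕ∞) := by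
      rw [hvM, padicValNat_eq_emultiplicity hM]
    rw [hlte, hem1, hemM, ← Nat.cast_add]
  -- rewrite target difference
  have hD : r ^ (M * (p - 1)) - 1 = a ^ M - 1 := by
    rw [hadef, ← pow_mul, mul_comm]
  rw [hMdef] at hD
  rw [hD]
  refine ⟨hgcd, ?_, ?_⟩
  · rcases Nat.lt_or_ge n 2 with hn1 | hn2
    · have hn1 : n = 1 := by omega
      have hi1 : i = 1 := by rw [hidef, hn1]; omega
      rw [hi1, pow_one]
      exact dvd_trans hfermat (by simpa using sub_dvd_pow_sub_pow a 1 M)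
    · apply pow_dvd_of_le_emultiplicity
      rw [hEfact hn2]
      exact_mod_cast Nat.cast_le.mpr (min_le_left (1 + v) n)
  · intro hlt
    rcases Nat.lt_or_ge n 2 with hn1 | hn2
    · exfalso; rw [hidef] at hlt; omega
    · have hie : i = 1 + v := by rw [hidef] at hlt ⊢; omega
      apply not_pow_dvd_of_emultiplicity_lt
      rw [hEfact hn2, hie]
      exact_mod_cast Nat.lt_succ_self (1 + v)
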